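/- For the gl(1|1)-modules II_{λ,γ} and II_{λ',γ'} with λ + λ' ≠ 0, the tensor product II_{λ,γ} ⊗ II_{λ',γ'} decomposes as a direct sum II_{λ+λ',γ+γ'} ⊕ II_{λ+λ',γ+γ'-1}. -/

import Mathlib

/-!
STATEMENT 12: For the gl(1|1)-modules II_{λ,γ} and II_{λ',γ'} with
λ + λ' ≠ 0, the tensor product II_{λ,γ} ⊗ II_{λ',γ'} decomposes as
II_{λ+λ',γ+γ'} ⊕ II_{λ+λ',γ+γ'-1}.

II_{λ,γ} is modelled on ℂ × ℂ with basis v = (1,0) (even), w = (0,1) (odd):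
Hv = λv, Hw = λw, Gv = γv, Gw = (γ-1)w, Q-v = w, Q+w = λv, Q+v = Q-w = 0.
The tensor product (with the Koszul-sign coproduct x ↦ x⊗1 + 1⊗x) is modelled
on ℂ⁴ in the basis v⊗v', v⊗w', w⊗v', w⊗w' (coordinates a, b, c, d).
-/

noncomputable section

abbrev V2 := ℂ × ℂ
abbrev V4 := ℂ × ℂ × ℂ × ℂ

/-- action on II_{λ,γ} -/
def mH (lam : ℂ) (x : V2) : V2 := (lam * x.1, lam * x.2)
def mG (gam : ℂ) (x : V2) : V2 := (gam * x.1, (gam - 1) * x.2)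
def mQm (x : V2) : V2 := (0, x.1)
def mQp (lam : ℂ) (x : V2) : V2 := (lam * x.2, 0)

/-- action on the tensor product II_{λ,γ} ⊗ II_{λ',γ'} -/
def TH (lam lam' : ℂ) (x : V4) : V4 :=
  ((lam + lam') * x.1, (lam + lam') * x.2.1,
    (lam + lam') * x.2.2.1, (lam + lam') * x.2.2.2)
def TG (gam gam' : ℂ) (x : V4) : V4 :=
  ((gam + gam') * x.1, (gam + gam' - 1) * x.2.1,
    (gam + gam' - 1) * x.2.2.1, (gam + gam' - 2) * x.2.2.2)
def TQm (x : V4) : V4 := (0, x.1, x.1, x.2.1 - x.2.2.1)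
def TQp (lam lam' : ℂ) (x : V4) : V4 :=
  (lam' * x.2.1 + lam * x.2.2.1, lam * x.2.2.2, -(lam' * x.2.2.2), 0)

def eIso (lam lam' : ℂ) (h : lam + lam' ≠ 0) : V4 ≃ₗ[ℂ] V2 × V2 where
  toFun x := ((x.1, (lam' * x.2.1 + lam * x.2.2.1) / (lam + lam')),
              ((x.2.1 - x.2.2.1) / (lam + lam'), x.2.2.2 / (lam + lam')))
  invFun y := (y.1.1, y.1.2 + lam * y.2.1, y.1.2 - lam' * y.2.1,
               (lam + lam') * y.2.2)
  map_add' x y := by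
    ext <;> simp <;> field_simp <;> ring
  map_smul' c x := by
    ext <;> simp <;> field_simp <;> ring
  left_inv x := by
    ext <;> simp <;> field_simp <;> ring
  right_inv y := by
    ext <;> simp <;> field_simp <;> ring

theorem II_tensor_II (lam gam lam' gam' : ℂ) (h : lam + lam' ≠ 0) :
    ∃ e : V4 ≃ₗ[ℂ] V2 × V2,
      (∀ x : V4, e (TH lam lam' x)
          = (mH (lam + lam') (e x).1, mH (lam + lam') (e x).2)) ∧
      (∀ x : V4, e (TG gam gam' x)
          = (mG (gam + gam') (e x).1, mG (gam + gam' - 1) (e x).2)) ∧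
      (∀ x : V4, e (TQp lam lam' x)
          = (mQp (lam + lam') (e x).1, mQp (lam + lam') (e x).2)) ∧
      (∀ x : V4, e (TQm x) = (mQm (e x).1, mQm (e x).2)) := by
  refine ⟨eIso lam lam' h, ?_, ?_, ?_, ?_⟩ <;> intro x <;>
    (ext <;> simp only [eIso, TH, TG, TQm, TQp, mH, mG, mQm, mQp,
      LinearEquiv.coe_mk, Equiv.coe_fn_mk]) <;> field_simp <;>
    (try ring) <;> simp <;> (have h' : lam' + lam ≠ 0 := by rwa [add_comm]) <;> field_simp <;> ring

end
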